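/- arXiv:1507.04074 — 2 statements merged into one kernel-verified Lean document; each statement's English description precedes it below -/
import Mathlib

section
/- For every even k ≥ 2, P_{C_k}(x) = (½(√(1+4x)+1))^k + (½(√(1+4x)−1))^k for all x ≥ 0; in particular P_{C_k}(2) = 2^k + 1. -/
open scoped Classical
open Polynomial

/-- `s` is an independent set of `G`. -/
def IsIndepFinset {V : Type*} (G : SimpleGraph V) (s : Finset V) : Prop :=
  ∀ ⦃v⦄, v ∈ s → ∀ ⦃w⦄, w ∈ s → ¬ G.Adj v w

/-- The independence polynomial of `G` restricted to independent sets contained in `A`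
(so `indepPolyOn G Finset.univ` is the independence polynomial of `G`, and taking `A` to be
the set of vertices of maximum degree gives `P_{G*}`). -/
noncomputable def indepPolyOn {V : Type*} [Fintype V] (G : SimpleGraph V)
    (A : Finset V) : Polynomial ℝ :=
  ∑ s ∈ A.powerset.filter (fun s => IsIndepFinset G s), (X : Polynomial ℝ) ^ s.card

/-- The independence polynomial `P_G(x) = Σ_k i_G(k) x^k`. -/
noncomputable def indepPoly {V : Type*} [Fintype V] (G : SimpleGraph V) : Polynomial ℝ :=
  indepPolyOn G Finset.univ

noncomputable def Pn (x : ℝ) (n : ℕ) : ℝ :=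
  ∑ s ∈ (Finset.range n).powerset.filter (fun s => ∀ i ∈ s, i + 1 ∉ s), x ^ s.card

lemma Pn_zero (x : ℝ) : Pn x 0 = 1 := by
  rw [Pn]
  simp [Finset.filter_singleton]

lemma Pn_one (x : ℝ) : Pn x 1 = 1 + x := by
  rw [Pn]
  have : (Finset.range 1).powerset = {∅, {0}} := rfl
  rw [this, Finset.filter_insert, Finset.filter_singleton]
  norm_num

lemma Pn_succ_succ (x : ℝ) (n : ℕ) : Pn x (n + 2) = Pn x (n + 1) + x * Pn x n := by
  classical
  rw [Pn, ← Finset.sum_filter_add_sum_filter_not _ (fun s => (n+1) ∉ s)]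
  congr 1
  · -- sets not containing n+1
    rw [Pn]
    congr 1
    ext s
    simp only [Finset.mem_filter, Finset.mem_powerset]
    constructor
    · rintro ⟨⟨hsub, hsp⟩, hni⟩
      refine ⟨fun a ha => ?_, hsp⟩
      have h1 := hsub ha
      have h2 : a ≠ n + 1 := fun h => hni (h ▸ ha)
      simp only [Finset.mem_range] at h1 ⊢
      omega
    · rintro ⟨hsub, hsp⟩
      refine ⟨⟨fun a ha => ?_, hsp⟩, fun h => ?_⟩
      · have := hsub ha; simp only [Finset.mem_range] at this ⊢; omega
      · have := hsub h; simp only [Finset.mem_range] at this; omega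
  · -- sets containing n+1
    rw [Pn, Finset.mul_sum]
    refine Finset.sum_nbij' (fun s => s.erase (n+1)) (fun t => insert (n+1) t) ?_ ?_ ?_ ?_ ?_
    · intro s hs
      simp only [Finset.mem_filter, Finset.mem_powerset, not_not] at hs ⊢
      obtain ⟨⟨hsub, hsp⟩, hmem⟩ := hs
      refine ⟨fun a ha => ?_, fun a ha => ?_⟩
      · rw [Finset.mem_erase] at ha
        have h1 := hsub ha.2
        simp only [Finset.mem_range] at h1 ⊢
        have : a ≠ n := fun h => hsp a ha.2 (h ▸ hmem)
        omega
      · rw [Finset.mem_erase] at ha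
        rw [Finset.mem_erase]
        rintro ⟨-, hmem2⟩
        exact hsp a ha.2 hmem2
    · intro t ht
      simp only [Finset.mem_filter, Finset.mem_powerset, not_not] at ht ⊢
      obtain ⟨hsub, hsp⟩ := ht
      refine ⟨⟨fun a ha => ?_, fun a ha hmem => ?_⟩, Finset.mem_insert_self _ _⟩
      · rw [Finset.mem_insert] at ha
        simp only [Finset.mem_range]
        rcases ha with rfl | ha
        · omega
        · have := hsub ha; simp only [Finset.mem_range] at this; omega
      · rw [Finset.mem_insert] at ha hmem
        rcases ha with rfl | ha
        · rcases hmem with h | h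
          · omega
          · have := hsub h; simp only [Finset.mem_range] at this; omega
        · rcases hmem with h | hmem
          · have := hsub ha; simp only [Finset.mem_range] at this; omega
          · exact hsp a ha hmem
    · intro s hs
      simp only [Finset.mem_filter, not_not] at hs
      exact Finset.insert_erase hs.2
    · intro t ht
      simp only [Finset.mem_filter, Finset.mem_powerset] at ht
      refine Finset.erase_insert (fun h => ?_)
      have := ht.1 h; simp only [Finset.mem_range] at this; omega
    · intro s hs
      simp only [Finset.mem_filter, not_not] at hs
      have hc : s.card = (s.erase (n+1)).card + 1 := by
        rw [Finset.card_erase_of_mem hs.2]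
        have : 0 < s.card := Finset.card_pos.mpr ⟨n+1, hs.2⟩
        omega
      rw [hc, pow_succ]
      ring

lemma Pn_closed (x r : ℝ) (hr2 : r ^ 2 = 1 + 4 * x) (n : ℕ) :
    r * Pn x n = ((r + 1) / 2) ^ (n + 2) - ((1 - r) / 2) ^ (n + 2) := by
  induction n using Nat.twoStepInduction with
  | zero => rw [Pn_zero]; ring
  | one => rw [Pn_one]; linear_combination (-(r / 4)) * hr2
  | more n ih1 ih2 =>
    rw [Pn_succ_succ]
    linear_combination ih2 + x * ih1 - ((r+1)/2)^(n+2)/4 * hr2 + ((1-r)/2)^(n+2)/4 * hr2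

lemma adj_iff (m : ℕ) (u v : Fin (m + 3)) :
    (SimpleGraph.cycleGraph (m + 3)).Adj u v ↔
      (u.val + 1 = v.val ∨ v.val + 1 = u.val ∨ (u.val = 0 ∧ v.val = m + 2)
        ∨ (v.val = 0 ∧ u.val = m + 2)) := by
  have hu := u.isLt
  have hv := v.isLt
  have hmod : ∀ a b : ℕ, a < m + 3 → b < m + 3 →
      ((m + 3 - b + a) % (m + 3) = 1 ↔ (a = b + 1 ∨ (b = m + 2 ∧ a = 0))) := by
    intro a b ha hb
    rcases Nat.lt_or_ge (m + 3 - b + a) (m + 3) with h | h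
    · rw [Nat.mod_eq_of_lt h]; omega
    · rw [Nat.mod_eq_sub_mod h, Nat.mod_eq_of_lt (by omega)]; omega
  rw [SimpleGraph.cycleGraph_adj', Fin.sub_def, Fin.sub_def]
  simp only [Fin.val_mk]
  rw [hmod u.val v.val hu hv, hmod v.val u.val hv hu]
  omega

lemma fin_zero_val (m : ℕ) : ((0 : Fin (m + 3)) : ℕ) = 0 := rfl

open Fin.NatCast in
lemma cycle_eval (x : ℝ) (m : ℕ) :
    (indepPoly (SimpleGraph.cycleGraph (m + 3))).eval x = Pn x (m + 2) + x * Pn x m := by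
  classical
  have hval : ∀ c : ℕ, c < m + 3 → ((c : Fin (m + 3)) : ℕ) = c := fun c hc => by
    rw [Fin.val_natCast]; exact Nat.mod_eq_of_lt hc
  have hA : ∑ s ∈ ((Finset.univ.powerset.filter
        (fun s => IsIndepFinset (SimpleGraph.cycleGraph (m + 3)) s)).filter
        (fun s => ¬ (0 : Fin (m + 3)) ∈ s)), x ^ s.card = Pn x (m + 2) := by
    rw [Pn]
    refine Finset.sum_nbij' (fun s => s.image (fun v : Fin (m + 3) => v.val - 1))
      (fun t => t.image (fun i : ℕ => ((i + 1 : ℕ) : Fin (m + 3)))) ?_ ?_ ?_ ?_ ?_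
    · intro s hs
      simp only [Finset.mem_filter, Finset.mem_powerset] at hs
      obtain ⟨⟨-, hind⟩, h0⟩ := hs
      have hpos : ∀ v ∈ s, 1 ≤ (v : Fin (m + 3)).val := by
        intro v hv
        by_contra h
        exact h0 (Fin.ext ((by omega : v.val = 0).trans (fin_zero_val m).symm) ▸ hv)
      refine Finset.mem_filter.mpr ⟨Finset.mem_powerset.mpr ?_, ?_⟩
      · intro a ha
        simp only [Finset.mem_image] at ha
        obtain ⟨v, hv, rfl⟩ := ha
        have h1 := v.isLt
        have h2 := hpos v hv
        exact Finset.mem_range.mpr (by omega)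
      · intro a ha hsucc
        simp only [Finset.mem_image] at ha hsucc
        obtain ⟨v, hv, hveq⟩ := ha
        obtain ⟨w, hw, hweq⟩ := hsucc
        have h1 := hpos v hv
        have h2 := hpos w hw
        exact hind hv hw ((adj_iff m v w).mpr (Or.inl (by omega)))
    · intro t ht
      simp only [Finset.mem_filter, Finset.mem_powerset] at ht
      obtain ⟨hsub, hsp⟩ := ht
      have hlt : ∀ i ∈ t, i < m + 2 := fun i hi => Finset.mem_range.mp (hsub hi)
      have hvals : ∀ i ∈ t, ((((i + 1 : ℕ)) : Fin (m + 3)) : ℕ) = i + 1 := fun i hi =>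
        hval _ (by have := hlt i hi; omega)
      refine Finset.mem_filter.mpr ⟨Finset.mem_filter.mpr
        ⟨Finset.mem_powerset.mpr (Finset.subset_univ _), ?_⟩, ?_⟩
      · intro u hu w hw
        simp only [Finset.mem_image] at hu hw
        obtain ⟨i, hi, rfl⟩ := hu
        obtain ⟨j, hj', rfl⟩ := hw
        rw [adj_iff, hvals i hi, hvals j hj']
        rintro (h | h | ⟨h, -⟩ | ⟨h, -⟩)
        · exact hsp i hi ((show j = i + 1 by omega) ▸ hj')
        · exact hsp j hj' ((show i = j + 1 by omega) ▸ hi)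
        · omega
        · omega
      · intro h
        simp only [Finset.mem_image] at h
        obtain ⟨i, hi, hieq⟩ := h
        have h1 := hvals i hi
        rw [hieq, fin_zero_val] at h1
        omega
    · intro s hs
      simp only [Finset.mem_filter] at hs
      have hpos : ∀ v ∈ s, 1 ≤ (v : Fin (m + 3)).val := by
        intro v hv
        by_contra h
        exact hs.2 (Fin.ext ((by omega : v.val = 0).trans (fin_zero_val m).symm) ▸ hv)
      simp only [Finset.image_image]
      have heq : ∀ v ∈ s, ((((v : Fin (m + 3)).val - 1) + 1 : ℕ) : Fin (m + 3)) = v := by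
        intro v hv
        have h1 := hpos v hv
        rw [show (v : Fin (m + 3)).val - 1 + 1 = v.val by omega, Fin.cast_val_eq_self]
      calc s.image _ = s.image id := Finset.image_congr (fun v hv => heq v hv)
        _ = s := Finset.image_id
    · intro t ht
      simp only [Finset.mem_filter, Finset.mem_powerset] at ht
      have hvals : ∀ i ∈ t, ((((i + 1 : ℕ)) : Fin (m + 3)) : ℕ) = i + 1 := fun i hi =>
        hval _ (by have := Finset.mem_range.mp (ht.1 hi); omega)
      simp only [Finset.image_image]
      calc t.image _ = t.image id := Finset.image_congr (fun i hi => by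
            simp only [Function.comp_apply, id_eq]
            rw [hvals i hi]
            omega)
        _ = t := Finset.image_id
    · intro s hs
      simp only [Finset.mem_filter] at hs
      have hpos : ∀ v ∈ s, 1 ≤ (v : Fin (m + 3)).val := by
        intro v hv
        by_contra h
        exact hs.2 (Fin.ext ((by omega : v.val = 0).trans (fin_zero_val m).symm) ▸ hv)
      rw [Finset.card_image_of_injOn]
      intro u hu v hv huv
      have h1 := hpos u hu
      have h2 := hpos v hv
      have huv' : (u : Fin (m + 3)).val - 1 = (v : Fin (m + 3)).val - 1 := huv
      exact Fin.ext (by omega)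
  have hB : ∑ s ∈ ((Finset.univ.powerset.filter
        (fun s => IsIndepFinset (SimpleGraph.cycleGraph (m + 3)) s)).filter
        (fun s => (0 : Fin (m + 3)) ∈ s)), x ^ s.card = x * Pn x m := by
    rw [Pn, Finset.mul_sum]
    refine Finset.sum_nbij' (fun s => (s.erase 0).image (fun v : Fin (m + 3) => v.val - 2))
      (fun t => insert (0 : Fin (m + 3)) (t.image (fun i : ℕ => ((i + 2 : ℕ) : Fin (m + 3)))))
      ?_ ?_ ?_ ?_ ?_
    · intro s hs
      simp only [Finset.mem_filter, Finset.mem_powerset] at hs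
      obtain ⟨⟨-, hind⟩, h0⟩ := hs
      have hbound : ∀ v ∈ s, v ≠ 0 → 2 ≤ (v : Fin (m + 3)).val ∧ v.val ≤ m + 1 := by
        intro v hv hne
        have hnadj : ¬ (SimpleGraph.cycleGraph (m + 3)).Adj 0 v := hind h0 hv
        rw [adj_iff] at hnadj
        push_neg at hnadj
        have hv0 : v.val ≠ 0 := fun h => hne (Fin.ext (h.trans (fin_zero_val m).symm))
        have hlt := v.isLt
        rw [fin_zero_val m] at hnadj
        omega
      refine Finset.mem_filter.mpr ⟨Finset.mem_powerset.mpr ?_, ?_⟩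
      · intro a ha
        simp only [Finset.mem_image, Finset.mem_erase] at ha
        obtain ⟨v, ⟨hne, hv⟩, rfl⟩ := ha
        have := hbound v hv hne
        exact Finset.mem_range.mpr (by omega)
      · intro a ha hsucc
        simp only [Finset.mem_image, Finset.mem_erase] at ha hsucc
        obtain ⟨v, ⟨hnv, hv⟩, hveq⟩ := ha
        obtain ⟨w, ⟨hnw, hw⟩, hweq⟩ := hsucc
        have h1 := hbound v hv hnv
        have h2 := hbound w hw hnw
        exact hind hv hw ((adj_iff m v w).mpr (Or.inl (by omega)))
    · intro t ht
      simp only [Finset.mem_filter, Finset.mem_powerset] at ht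
      obtain ⟨hsub, hsp⟩ := ht
      have hlt : ∀ i ∈ t, i < m := fun i hi => Finset.mem_range.mp (hsub hi)
      have hvals : ∀ i ∈ t, ((((i + 2 : ℕ)) : Fin (m + 3)) : ℕ) = i + 2 := fun i hi =>
        hval _ (by have := hlt i hi; omega)
      refine Finset.mem_filter.mpr ⟨Finset.mem_filter.mpr
        ⟨Finset.mem_powerset.mpr (Finset.subset_univ _), ?_⟩, Finset.mem_insert_self _ _⟩
      intro u hu w hw
      simp only [Finset.mem_insert, Finset.mem_image] at hu hw
      rcases hu with rfl | ⟨i, hi, rfl⟩ <;> rcases hw with rfl | ⟨j, hj', rfl⟩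
      · exact (SimpleGraph.cycleGraph (m + 3)).loopless.irrefl _
      · rw [adj_iff, hvals j hj', fin_zero_val]
        have := hlt j hj'
        rintro (h | h | ⟨-, h⟩ | ⟨h, -⟩) <;> omega
      · rw [adj_iff, hvals i hi, fin_zero_val]
        have := hlt i hi
        rintro (h | h | ⟨h, -⟩ | ⟨-, h⟩) <;> omega
      · rw [adj_iff, hvals i hi, hvals j hj']
        have := hlt i hi
        have := hlt j hj'
        rintro (h | h | ⟨h, -⟩ | ⟨h, -⟩)
        · exact hsp i hi ((show j = i + 1 by omega) ▸ hj')
        · exact hsp j hj' ((show i = j + 1 by omega) ▸ hi)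
        · omega
        · omega
    · intro s hs
      simp only [Finset.mem_filter, Finset.mem_powerset] at hs
      obtain ⟨⟨-, hind⟩, h0⟩ := hs
      have hbound : ∀ v ∈ s, v ≠ 0 → 2 ≤ (v : Fin (m + 3)).val ∧ v.val ≤ m + 1 := by
        intro v hv hne
        have hnadj : ¬ (SimpleGraph.cycleGraph (m + 3)).Adj 0 v := hind h0 hv
        rw [adj_iff] at hnadj
        push_neg at hnadj
        have hv0 : v.val ≠ 0 := fun h => hne (Fin.ext (h.trans (fin_zero_val m).symm))
        have hlt := v.isLt
        rw [fin_zero_val m] at hnadj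
        omega
      simp only [Finset.image_image]
      have heq : ∀ v ∈ s.erase 0, ((((v : Fin (m + 3)).val - 2) + 2 : ℕ) : Fin (m + 3)) = v := by
        intro v hv
        rw [Finset.mem_erase] at hv
        have h1 := (hbound v hv.2 hv.1).1
        rw [show (v : Fin (m + 3)).val - 2 + 2 = v.val by omega, Fin.cast_val_eq_self]
      calc insert (0 : Fin (m + 3)) ((s.erase 0).image _)
          = insert (0 : Fin (m + 3)) ((s.erase 0).image id) := by
            congr 1
            exact Finset.image_congr (fun v hv => heq v hv)
        _ = s := by rw [Finset.image_id, Finset.insert_erase h0]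
    · intro t ht
      simp only [Finset.mem_filter, Finset.mem_powerset] at ht
      have hvals : ∀ i ∈ t, ((((i + 2 : ℕ)) : Fin (m + 3)) : ℕ) = i + 2 := fun i hi =>
        hval _ (by have := Finset.mem_range.mp (ht.1 hi); omega)
      have h0not : (0 : Fin (m + 3)) ∉ t.image (fun i : ℕ => ((i + 2 : ℕ) : Fin (m + 3))) := by
        intro h
        simp only [Finset.mem_image] at h
        obtain ⟨i, hi, hieq⟩ := h
        have h1 := hvals i hi
        rw [hieq, fin_zero_val] at h1
        omega
      simp only [Finset.erase_insert h0not, Finset.image_image]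
      calc t.image _ = t.image id := Finset.image_congr (fun i hi => by
            simp only [Function.comp_apply, id_eq]
            rw [hvals i hi]
            omega)
        _ = t := Finset.image_id
    · intro s hs
      simp only [Finset.mem_filter, Finset.mem_powerset] at hs
      obtain ⟨⟨-, hind⟩, h0⟩ := hs
      have hbound : ∀ v ∈ s, v ≠ 0 → 2 ≤ (v : Fin (m + 3)).val ∧ v.val ≤ m + 1 := by
        intro v hv hne
        have hnadj : ¬ (SimpleGraph.cycleGraph (m + 3)).Adj 0 v := hind h0 hv
        rw [adj_iff] at hnadj
        push_neg at hnadj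
        have hv0 : v.val ≠ 0 := fun h => hne (Fin.ext (h.trans (fin_zero_val m).symm))
        have hlt := v.isLt
        rw [fin_zero_val m] at hnadj
        omega
      rw [Finset.card_image_of_injOn, Finset.card_erase_of_mem h0]
      · have hc : 0 < s.card := Finset.card_pos.mpr ⟨0, h0⟩
        conv_lhs => rw [show s.card = (s.card - 1) + 1 by omega]
        rw [pow_succ]
        ring
      · intro u hu v hv huv
        rw [Finset.mem_coe, Finset.mem_erase] at hu hv
        have h1 := (hbound u hu.2 hu.1).1
        have h2 := (hbound v hv.2 hv.1).1
        have huv' : (u : Fin (m + 3)).val - 2 = (v : Fin (m + 3)).val - 2 := huv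
        exact Fin.ext (by omega)
  rw [indepPoly, indepPolyOn, Polynomial.eval_finset_sum]
  simp only [Polynomial.eval_pow, Polynomial.eval_X]
  rw [← Finset.sum_filter_add_sum_filter_not _ (fun s => (0 : Fin (m + 3)) ∈ s), hB, hA]
  ring

lemma two_eval (x : ℝ) : (indepPoly (SimpleGraph.cycleGraph 2)).eval x = 1 + 2 * x := by
  classical
  have hadj : (SimpleGraph.cycleGraph 2).Adj 0 1 := by decide
  have hu : (Finset.univ : Finset (Fin 2)).powerset.filter
      (fun s => IsIndepFinset (SimpleGraph.cycleGraph 2) s) = {∅, {0}, {1}} := by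
    ext s
    simp only [Finset.mem_filter, Finset.mem_powerset, Finset.subset_univ, true_and,
      Finset.mem_insert, Finset.mem_singleton]
    constructor
    · intro h
      by_cases h0 : (0 : Fin 2) ∈ s <;> by_cases h1 : (1 : Fin 2) ∈ s
      · exact absurd hadj (h h0 h1)
      · right; left; ext v; fin_cases v <;> simp [h0, h1]
      · right; right; ext v; fin_cases v <;> simp [h0, h1]
      · left; ext v; fin_cases v <;> simp [h0, h1]
    · rintro (rfl | rfl | rfl)
      · intro v hv; simp at hv
      · intro v hv w hw
        simp only [Finset.mem_singleton] at hv hw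
        subst hv; subst hw; exact (SimpleGraph.cycleGraph 2).loopless.irrefl _
      · intro v hv w hw
        simp only [Finset.mem_singleton] at hv hw
        subst hv; subst hw; exact (SimpleGraph.cycleGraph 2).loopless.irrefl _
  rw [indepPoly, indepPolyOn, hu]
  rw [Finset.sum_insert (by decide), Finset.sum_insert (by decide),
    Finset.sum_singleton]
  simp
  ring

/-- For every even `k ≥ 2` and all real `x ≥ 0`,
`P_{C_k}(x) = (½(√(1+4x)+1))^k + (½(√(1+4x)-1))^k`; in particular `P_{C_k}(2) = 2^k + 1`. -/
theorem stmt10 (k : ℕ) (hk : 2 ≤ k) (hke : Even k) :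
    (∀ x : ℝ, 0 ≤ x →
      (indepPoly (SimpleGraph.cycleGraph k)).eval x
        = ((Real.sqrt (1 + 4 * x) + 1) / 2) ^ k + ((Real.sqrt (1 + 4 * x) - 1) / 2) ^ k) ∧
    (indepPoly (SimpleGraph.cycleGraph k)).eval (2 : ℝ) = 2 ^ k + 1 := by
  have key : ∀ x : ℝ, 0 ≤ x → (indepPoly (SimpleGraph.cycleGraph k)).eval x
      = ((Real.sqrt (1 + 4 * x) + 1) / 2) ^ k + ((Real.sqrt (1 + 4 * x) - 1) / 2) ^ k := by
    intro x hx
    set r := Real.sqrt (1 + 4 * x) with hrdef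
    have hr2 : r ^ 2 = 1 + 4 * x := Real.sq_sqrt (by linarith)
    have hr1 : 1 ≤ r := by nlinarith [Real.sqrt_nonneg (1 + 4 * x)]
    have hrne : r ≠ 0 := by linarith
    have hflip : ((r - 1) / 2) ^ k = ((1 - r) / 2) ^ k := by
      rw [show ((1 : ℝ) - r) / 2 = -((r - 1) / 2) by ring, hke.neg_pow]
    rw [hflip]
    rcases eq_or_lt_of_le hk with heq | hlt
    · rw [← heq, two_eval]
      linear_combination (-1/2 : ℝ) * hr2
    · obtain ⟨m, rfl⟩ : ∃ m, k = m + 3 := ⟨k - 3, by omega⟩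
      rw [cycle_eval]
      have h1 := Pn_closed x r hr2 (m + 2)
      have h2 := Pn_closed x r hr2 m
      have hmain : r * (Pn x (m + 2) + x * Pn x m)
          = r * (((r + 1) / 2) ^ (m + 3) + ((1 - r) / 2) ^ (m + 3)) := by
        linear_combination h1 + x * h2
          + ((-(((r + 1) / 2) ^ (m + 2)) + ((1 - r) / 2) ^ (m + 2)) / 4) * hr2
      exact mul_left_cancel₀ hrne hmain
  refine ⟨key, ?_⟩
  have h9 : Real.sqrt (1 + 4 * 2) = 3 := by
    rw [show (1 + 4 * 2 : ℝ) = 3 ^ 2 by norm_num, Real.sqrt_sq (by norm_num)]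
  rw [key 2 (by norm_num), h9]
  norm_num
end

section
/- For the complete binary tree T_h of height h (with T_0 the empty tree, T_1 a single vertex), the independence polynomials satisfy P_{T_h}(x) = P_{T_{h−1}}(x)² + x · P_{T_{h−2}}(x)⁴ for h ≥ 2, with P_{T_0}(x) = 1 and P_{T_1}(x) = 1 + x. Moreover, for h ≥ 3, P_{T_h*}(x) = P_{T_{h−2}}(x)², where T_h* is the induced subgraph on the vertices of maximum degree (degree 3). -/
open scoped Classical
open Polynomial

/-- The complete binary tree of height `h`, on `2^h - 1` vertices, in heap encoding:
vertex `i` represents the node numbered `i+1 ∈ {1, …, 2^h - 1}`, whose children are the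
nodes numbered `2(i+1)` and `2(i+1)+1`. -/
def binTree (h : ℕ) : SimpleGraph (Fin (2 ^ h - 1)) :=
  SimpleGraph.fromRel (fun a b => (b : ℕ) + 1 = 2 * ((a : ℕ) + 1) ∨
    (b : ℕ) + 1 = 2 * ((a : ℕ) + 1) + 1)



-- ===== auxiliary development =====

lemma isIndep_subset {V : Type*} {G : SimpleGraph V} {s t : Finset V}
    (h : IsIndepFinset G t) (hst : s ⊆ t) : IsIndepFinset G s :=
  fun _ hv _ hw => h (hst hv) (hst hw)

lemma isIndep_empty {V : Type*} (G : SimpleGraph V) : IsIndepFinset G ∅ := by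
  intro v hv; simp at hv

lemma indepPolyOn_empty {V : Type*} [Fintype V] (G : SimpleGraph V) :
    indepPolyOn G ∅ = 1 := by
  rw [indepPolyOn, Finset.powerset_empty, Finset.filter_singleton,
    if_pos (isIndep_empty G)]
  simp

lemma indepPolyOn_image {V W : Type*} [Fintype V] [Fintype W] [DecidableEq V]
    {G : SimpleGraph V} {H : SimpleGraph W} {f : W → V} (hf : Function.Injective f)
    (hadj : ∀ a b, H.Adj a b ↔ G.Adj (f a) (f b)) (S : Finset W) :
    indepPolyOn G (S.image f) = indepPolyOn H S := by
  rw [indepPolyOn, indepPolyOn]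
  refine (Finset.sum_bij (fun (s : Finset W) _ => s.image f) ?_ ?_ ?_ ?_).symm
  · intro s hs
    simp only [Finset.mem_filter, Finset.mem_powerset] at hs ⊢
    refine ⟨Finset.image_subset_image hs.1, ?_⟩
    intro v hv w hw
    simp only [Finset.mem_image] at hv hw
    obtain ⟨a, ha, rfl⟩ := hv; obtain ⟨b, hb, rfl⟩ := hw
    rw [← hadj]; exact hs.2 ha hb
  · intro a _ b _ hab
    exact Finset.image_injective hf hab
  · intro t ht
    simp only [Finset.mem_filter, Finset.mem_powerset] at ht
    obtain ⟨s, hsS, rfl⟩ := Finset.subset_image_iff.mp ht.1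
    refine ⟨s, ?_, rfl⟩
    simp only [Finset.mem_filter, Finset.mem_powerset]
    exact ⟨hsS, fun a ha b hb hadj' => ht.2 (Finset.mem_image_of_mem f ha)
      (Finset.mem_image_of_mem f hb) ((hadj a b).mp hadj')⟩
  · intro s _
    rw [Finset.card_image_of_injective _ hf]

lemma indepPolyOn_union {V : Type*} [Fintype V] [DecidableEq V] {G : SimpleGraph V} {A B : Finset V}
    (hd : ∀ a ∈ A, a ∉ B)
    (hsep : ∀ a ∈ A, ∀ b ∈ B, ¬ G.Adj a b) :
    indepPolyOn G (A ∪ B) = indepPolyOn G A * indepPolyOn G B := by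
  rw [indepPolyOn, indepPolyOn, indepPolyOn, Finset.sum_mul_sum, ← Finset.sum_product']
  refine Finset.sum_bij' (fun s _ => (s ∩ A, s ∩ B)) (fun p _ => p.1 ∪ p.2) ?_ ?_ ?_ ?_ ?_
  · intro s hs
    simp only [Finset.mem_filter, Finset.mem_powerset, Finset.mem_product] at hs ⊢
    exact ⟨⟨Finset.inter_subset_right, isIndep_subset hs.2 Finset.inter_subset_left⟩,
      ⟨Finset.inter_subset_right, isIndep_subset hs.2 Finset.inter_subset_left⟩⟩
  · intro p hp
    simp only [Finset.mem_filter, Finset.mem_powerset, Finset.mem_product] at hp ⊢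
    obtain ⟨⟨h1, h1i⟩, ⟨h2, h2i⟩⟩ := hp
    refine ⟨Finset.union_subset (h1.trans Finset.subset_union_left)
      (h2.trans Finset.subset_union_right), ?_⟩
    intro v hv w hw
    rcases Finset.mem_union.mp hv with hv1 | hv2 <;> rcases Finset.mem_union.mp hw with hw1 | hw2
    · exact h1i hv1 hw1
    · exact hsep _ (h1 hv1) _ (h2 hw2)
    · intro hA; exact hsep _ (h1 hw1) _ (h2 hv2) hA.symm
    · exact h2i hv2 hw2
  · intro s hs
    simp only [Finset.mem_filter, Finset.mem_powerset] at hs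
    show (s ∩ A) ∪ (s ∩ B) = s
    rw [← Finset.inter_union_distrib_left, Finset.inter_eq_left.mpr hs.1]
  · intro p hp
    simp only [Finset.mem_filter, Finset.mem_powerset, Finset.mem_product] at hp
    obtain ⟨⟨h1, _⟩, ⟨h2, _⟩⟩ := hp
    have e1 : (p.1 ∪ p.2) ∩ A = p.1 := by
      rw [Finset.union_inter_distrib_right, Finset.inter_eq_left.mpr h1]
      have : p.2 ∩ A = ∅ := by
        rw [Finset.eq_empty_iff_forall_notMem]
        intro x hx
        rw [Finset.mem_inter] at hx
        exact hd _ hx.2 (h2 hx.1)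
      rw [this, Finset.union_empty]
    have e2 : (p.1 ∪ p.2) ∩ B = p.2 := by
      rw [Finset.union_inter_distrib_right, Finset.inter_eq_left.mpr h2]
      have : p.1 ∩ B = ∅ := by
        rw [Finset.eq_empty_iff_forall_notMem]
        intro x hx
        rw [Finset.mem_inter] at hx
        exact hd _ (h1 hx.1) hx.2
      rw [this, Finset.empty_union]
    exact Prod.ext e1 e2
  · intro s hs
    simp only [Finset.mem_filter, Finset.mem_powerset] at hs
    have hdisj : Disjoint (s ∩ A) (s ∩ B) := by
      rw [Finset.disjoint_left]
      intro x hx1 hx2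
      rw [Finset.mem_inter] at hx1 hx2
      exact hd _ hx1.2 hx2.2
    have : (s ∩ A) ∪ (s ∩ B) = s := by
      rw [← Finset.inter_union_distrib_left, Finset.inter_eq_left.mpr hs.1]
    calc (X : Polynomial ℝ) ^ s.card = X ^ ((s ∩ A) ∪ (s ∩ B)).card := by rw [this]
    _ = X ^ ((s ∩ A).card + (s ∩ B).card) := by rw [Finset.card_union_of_disjoint hdisj]
    _ = X ^ (s ∩ A).card * X ^ (s ∩ B).card := pow_add _ _ _

lemma indepPolyOn_erase {V : Type*} [Fintype V] [DecidableEq V] {G : SimpleGraph V} {A : Finset V} {r : V}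
    (hr : r ∈ A) :
    indepPolyOn G A = indepPolyOn G (A.erase r)
      + X * indepPolyOn G (A.filter fun v => v ≠ r ∧ ¬ G.Adj r v) := by
  rw [indepPolyOn, ← Finset.sum_filter_add_sum_filter_not _ (fun s => r ∈ s)]
  rw [add_comm]
  congr 1
  · rw [indepPolyOn]
    congr 1
    ext s
    simp only [Finset.mem_filter, Finset.mem_powerset, Finset.subset_erase]
    tauto
  · rw [indepPolyOn, Finset.mul_sum]
    refine Finset.sum_bij' (fun s _ => s.erase r) (fun t _ => insert r t) ?_ ?_ ?_ ?_ ?_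
    · intro s hs
      simp only [Finset.mem_filter, Finset.mem_powerset] at hs ⊢
      obtain ⟨⟨hsub, hind⟩, hrs⟩ := hs
      refine ⟨?_, isIndep_subset hind (Finset.erase_subset _ _)⟩
      intro v hv
      rw [Finset.mem_erase] at hv
      simp only [Finset.mem_filter]
      exact ⟨hsub hv.2, hv.1, hind hrs hv.2⟩
    · intro t ht
      simp only [Finset.mem_filter, Finset.mem_powerset] at ht ⊢
      obtain ⟨hsub, hind⟩ := ht
      have hmem : ∀ v ∈ t, v ∈ A ∧ v ≠ r ∧ ¬ G.Adj r v := by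
        intro v hv
        have := hsub hv
        simpa using this
      refine ⟨⟨?_, ?_⟩, Finset.mem_insert_self r t⟩
      · intro v hv
        rcases Finset.mem_insert.mp hv with rfl | hv
        · exact hr
        · exact (hmem v hv).1
      · intro v hv w hw
        rw [Finset.mem_insert] at hv hw
        rcases hv with rfl | hv
        · rcases hw with rfl | hw
          · exact G.loopless.irrefl _
          · exact (hmem w hw).2.2
        · rcases hw with rfl | hw
          · intro hA; exact (hmem v hv).2.2 hA.symm
          · exact hind hv hw
    · intro s hs
      simp only [Finset.mem_filter] at hs
      exact Finset.insert_erase hs.2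
    · intro t ht
      simp only [Finset.mem_filter, Finset.mem_powerset] at ht
      apply Finset.erase_insert
      intro hrm
      have := ht.1 hrm
      simp at this
    · intro s hs
      simp only [Finset.mem_filter] at hs
      rw [Finset.card_erase_of_mem hs.2, ← pow_succ']
      congr 1
      have : 1 ≤ s.card := Finset.card_pos.mpr ⟨r, hs.2⟩
      omega


def numL (n : ℕ) : ℕ := n + 2 ^ Nat.log 2 n
def numR (n : ℕ) : ℕ := n + 2 ^ (Nat.log 2 n + 1)

section numfacts
variable {n m k : ℕ}

lemma pow_log_le (hn : 1 ≤ n) : 2 ^ Nat.log 2 n ≤ n := Nat.pow_log_le_self 2 (by omega)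
lemma lt_pow_log (hn : 1 ≤ n) : n < 2 ^ (Nat.log 2 n + 1) := Nat.lt_pow_succ_log_self one_lt_two n

lemma log_numL (hn : 1 ≤ n) : Nat.log 2 (numL n) = Nat.log 2 n + 1 := by
  have h1 := pow_log_le hn
  have h2 := lt_pow_log hn
  apply Nat.log_eq_of_pow_le_of_lt_pow
  · rw [pow_succ]; unfold numL; omega
  · have h3 : 2 ^ (Nat.log 2 n + 1 + 1) = 2 * 2 ^ (Nat.log 2 n + 1) := by ring
    have h4 : 2 ^ (Nat.log 2 n + 1) = 2 * 2 ^ Nat.log 2 n := by ring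
    unfold numL; omega

lemma log_numR (hn : 1 ≤ n) : Nat.log 2 (numR n) = Nat.log 2 n + 1 := by
  have h1 := pow_log_le hn
  have h2 := lt_pow_log hn
  apply Nat.log_eq_of_pow_le_of_lt_pow
  · unfold numR; omega
  · have h3 : 2 ^ (Nat.log 2 n + 1 + 1) = 2 * 2 ^ (Nat.log 2 n + 1) := by ring
    unfold numR; omega

lemma numL_lt3 (hn : 1 ≤ n) : numL n < 3 * 2 ^ Nat.log 2 n := by
  have h2 := lt_pow_log hn
  have h4 : 2 ^ (Nat.log 2 n + 1) = 2 * 2 ^ Nat.log 2 n := by ring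
  unfold numL; omega

lemma numR_ge3 (hn : 1 ≤ n) : 3 * 2 ^ Nat.log 2 n ≤ numR n := by
  have h1 := pow_log_le hn
  have h4 : 2 ^ (Nat.log 2 n + 1) = 2 * 2 ^ Nat.log 2 n := by ring
  unfold numR; omega

lemma numL_inj (hn : 1 ≤ n) (hm : 1 ≤ m) (h : numL n = numL m) : n = m := by
  have h1 := log_numL hn
  have h2 := log_numL hm
  rw [h] at h1
  have hl : Nat.log 2 n = Nat.log 2 m := by omega
  unfold numL at h; rw [hl] at h; omega

lemma numR_inj (hn : 1 ≤ n) (hm : 1 ≤ m) (h : numR n = numR m) : n = m := by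
  have h1 := log_numR hn
  have h2 := log_numR hm
  rw [h] at h1
  have hl : Nat.log 2 n = Nat.log 2 m := by omega
  unfold numR at h; rw [hl] at h; omega

lemma numL_ne_numR (hn : 1 ≤ n) (hm : 1 ≤ m) : numL n ≠ numR m := by
  intro h
  have h1 := log_numL hn
  have h2 := log_numR hm
  rw [h] at h1
  have hl : Nat.log 2 n = Nat.log 2 m := by omega
  have h3 := numL_lt3 hn
  have h4 := numR_ge3 hm
  rw [hl] at h3
  omega

lemma log_double (hn : 1 ≤ n) : Nat.log 2 (2 * n) = Nat.log 2 n + 1 := by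
  apply Nat.log_eq_of_pow_le_of_lt_pow
  · have := pow_log_le hn; rw [pow_succ]; omega
  · have := lt_pow_log hn
    have h3 : 2 ^ (Nat.log 2 n + 1 + 1) = 2 * 2 ^ (Nat.log 2 n + 1) := by ring
    omega

lemma log_double_succ (hn : 1 ≤ n) : Nat.log 2 (2 * n + 1) = Nat.log 2 n + 1 := by
  apply Nat.log_eq_of_pow_le_of_lt_pow
  · have := pow_log_le hn; rw [pow_succ]; omega
  · have := lt_pow_log hn
    have h3 : 2 ^ (Nat.log 2 n + 1 + 1) = 2 * 2 ^ (Nat.log 2 n + 1) := by ring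
    omega

lemma numL_two_mul (hn : 1 ≤ n) : numL (2 * n) = 2 * numL n := by
  unfold numL; rw [log_double hn, pow_succ]; ring
lemma numL_two_mul_add_one (hn : 1 ≤ n) : numL (2 * n + 1) = 2 * numL n + 1 := by
  unfold numL; rw [log_double_succ hn, pow_succ]; ring
lemma numR_two_mul (hn : 1 ≤ n) : numR (2 * n) = 2 * numR n := by
  unfold numR; rw [log_double hn, pow_succ]; ring
lemma numR_two_mul_add_one (hn : 1 ≤ n) : numR (2 * n + 1) = 2 * numR n + 1 := by
  unfold numR; rw [log_double_succ hn, pow_succ]; ring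

lemma numL_ge_two (hn : 1 ≤ n) : 2 ≤ numL n := by
  have : 1 ≤ 2 ^ Nat.log 2 n := Nat.one_le_two_pow
  unfold numL; omega

lemma numL_le_numR : numL n ≤ numR n := by
  have : 2 ^ Nat.log 2 n ≤ 2 ^ (Nat.log 2 n + 1) :=
    Nat.pow_le_pow_right (by norm_num) (by omega)
  unfold numL numR; omega

lemma numR_ge_two (hn : 1 ≤ n) : 2 ≤ numR n := le_trans (numL_ge_two hn) numL_le_numR

lemma numL_ge_four (hn : 2 ≤ n) : 4 ≤ numL n := by
  have ht : 1 ≤ Nat.log 2 n := Nat.log_pos one_lt_two (by omega)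
  have : 2 ≤ 2 ^ Nat.log 2 n :=
    le_trans (by norm_num) (Nat.pow_le_pow_right (by norm_num) ht)
  unfold numL; omega

lemma numR_ge_four (hn : 2 ≤ n) : 4 ≤ numR n := le_trans (numL_ge_four hn) numL_le_numR

lemma numR_lt_pow (hn : 1 ≤ n) (h : n < 2 ^ k) : numR n < 2 ^ (k + 1) := by
  have ht : Nat.log 2 n < k := Nat.log_lt_of_lt_pow (by omega) h
  have h2 := lt_pow_log hn
  have h3 : 2 ^ (Nat.log 2 n + 1) ≤ 2 ^ k := Nat.pow_le_pow_right (by norm_num) (by omega)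
  have h4 : 2 ^ (k + 1) = 2 * 2 ^ k := by ring
  unfold numR; omega

lemma numL_lt_pow (hn : 1 ≤ n) (h : n < 2 ^ k) : numL n < 2 ^ (k + 1) :=
  lt_of_le_of_lt numL_le_numR (numR_lt_pow hn h)

lemma numL_one : numL 1 = 2 := by simp [numL, Nat.log_one_right]
lemma numR_one : numR 1 = 3 := by simp [numR, Nat.log_one_right]

lemma num_surj (hm : 2 ≤ m) :
    ∃ n, 1 ≤ n ∧ n < 2 ^ Nat.log 2 m ∧ (numL n = m ∨ numR n = m) := by
  obtain ⟨w, hw⟩ : ∃ w, Nat.log 2 m = w + 1 :=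
    ⟨Nat.log 2 m - 1, by have := Nat.log_pos one_lt_two hm; omega⟩
  have h1 : 2 ^ (w + 1) ≤ m := by
    rw [← hw]; exact Nat.pow_log_le_self 2 (by omega)
  have h2 : m < 2 ^ (w + 2) := by
    have := Nat.lt_pow_succ_log_self one_lt_two m
    rw [hw] at this; exact this
  have hp1 : 2 ^ (w + 1) = 2 * 2 ^ w := by ring
  have hp2 : 2 ^ (w + 2) = 4 * 2 ^ w := by ring
  have hw0 : 1 ≤ 2 ^ w := Nat.one_le_two_pow
  by_cases hc : m < 3 * 2 ^ w
  · refine ⟨m - 2 ^ w, by omega, by rw [hw, hp1]; omega, Or.inl ?_⟩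
    have hlog : Nat.log 2 (m - 2 ^ w) = w := by
      apply Nat.log_eq_of_pow_le_of_lt_pow <;> omega
    unfold numL; rw [hlog]; omega
  · refine ⟨m - 2 ^ (w + 1), by omega, by rw [hw]; omega, Or.inr ?_⟩
    have hlog : Nat.log 2 (m - 2 ^ (w + 1)) = w := by
      apply Nat.log_eq_of_pow_le_of_lt_pow <;> omega
    unfold numR; rw [hlog]; omega

/-- ℕ-level adjacency of heap numbers -/
def nadj (n m : ℕ) : Prop := m = 2 * n ∨ m = 2 * n + 1 ∨ n = 2 * m ∨ n = 2 * m + 1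

lemma nadj_numL (hn : 1 ≤ n) (hm : 1 ≤ m) : nadj (numL n) (numL m) ↔ nadj n m := by
  unfold nadj
  constructor
  · rintro (h | h | h | h)
    · rw [← numL_two_mul hn] at h
      exact Or.inl (numL_inj hm (by omega) h)
    · rw [← numL_two_mul_add_one hn] at h
      exact Or.inr (Or.inl (numL_inj hm (by omega) h))
    · rw [← numL_two_mul hm] at h
      exact Or.inr (Or.inr (Or.inl (numL_inj hn (by omega) h)))
    · rw [← numL_two_mul_add_one hm] at h
      exact Or.inr (Or.inr (Or.inr (numL_inj hn (by omega) h)))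
  · rintro (rfl | rfl | rfl | rfl)
    · exact Or.inl (numL_two_mul hn)
    · exact Or.inr (Or.inl (numL_two_mul_add_one hn))
    · exact Or.inr (Or.inr (Or.inl (numL_two_mul hm)))
    · exact Or.inr (Or.inr (Or.inr (numL_two_mul_add_one hm)))

lemma nadj_numR (hn : 1 ≤ n) (hm : 1 ≤ m) : nadj (numR n) (numR m) ↔ nadj n m := by
  unfold nadj
  constructor
  · rintro (h | h | h | h)
    · rw [← numR_two_mul hn] at h
      exact Or.inl (numR_inj hm (by omega) h)
    · rw [← numR_two_mul_add_one hn] at h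
      exact Or.inr (Or.inl (numR_inj hm (by omega) h))
    · rw [← numR_two_mul hm] at h
      exact Or.inr (Or.inr (Or.inl (numR_inj hn (by omega) h)))
    · rw [← numR_two_mul_add_one hm] at h
      exact Or.inr (Or.inr (Or.inr (numR_inj hn (by omega) h)))
  · rintro (rfl | rfl | rfl | rfl)
    · exact Or.inl (numR_two_mul hn)
    · exact Or.inr (Or.inl (numR_two_mul_add_one hn))
    · exact Or.inr (Or.inr (Or.inl (numR_two_mul hm)))
    · exact Or.inr (Or.inr (Or.inr (numR_two_mul_add_one hm)))

lemma not_nadj_numL_numR (hn : 1 ≤ n) (hm : 1 ≤ m) : ¬ nadj (numL n) (numR m) := by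
  rintro (h | h | h | h)
  · rw [← numL_two_mul hn] at h
    exact numL_ne_numR (by omega) hm h.symm
  · rw [← numL_two_mul_add_one hn] at h
    exact numL_ne_numR (by omega) hm h.symm
  · rw [← numR_two_mul hm] at h
    exact numL_ne_numR hn (by omega) h
  · rw [← numR_two_mul_add_one hm] at h
    exact numL_ne_numR hn (by omega) h

end numfacts

section graphlayer
variable {h : ℕ}

lemma two_pow_pos (k : ℕ) : 1 ≤ (2:ℕ) ^ k := Nat.one_le_two_pow
lemma two_pow_mono {a b : ℕ} (hab : a ≤ b) : (2:ℕ) ^ a ≤ 2 ^ b :=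
  Nat.pow_le_pow_right (by norm_num) hab

lemma binTree_adj {u v : Fin (2 ^ h - 1)} :
    (binTree h).Adj u v ↔ nadj ((u : ℕ) + 1) ((v : ℕ) + 1) := by
  simp only [binTree, SimpleGraph.fromRel_adj, nadj, ne_eq, Fin.ext_iff]
  omega

/-- the root of `binTree (h+1)` -/
def rt (h : ℕ) : Fin (2 ^ (h + 1) - 1) :=
  ⟨0, by have h1 : 1 < 2 ^ (h + 1) := Nat.one_lt_two_pow_iff.mpr (by omega); omega⟩

lemma fin_succ_lt (i : Fin (2 ^ (h + 1) - 1)) : (i : ℕ) + 1 < 2 ^ (h + 1) := by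
  have := i.2; omega

/-- embedding of `binTree (h+1)` onto the left subtree of `binTree (h+2)` -/
def Lmap (h : ℕ) (i : Fin (2 ^ (h + 1) - 1)) : Fin (2 ^ (h + 2) - 1) :=
  ⟨numL ((i : ℕ) + 1) - 1, by
    have h1 : numL ((i : ℕ) + 1) < 2 ^ (h + 2) := numL_lt_pow (by omega) (fin_succ_lt i)
    have h2 : 2 ≤ numL ((i : ℕ) + 1) := numL_ge_two (by omega)
    omega⟩

/-- embedding of `binTree (h+1)` onto the right subtree of `binTree (h+2)` -/
def Rmap (h : ℕ) (i : Fin (2 ^ (h + 1) - 1)) : Fin (2 ^ (h + 2) - 1) :=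
  ⟨numR ((i : ℕ) + 1) - 1, by
    have h1 : numR ((i : ℕ) + 1) < 2 ^ (h + 2) := numR_lt_pow (by omega) (fin_succ_lt i)
    have h2 : 2 ≤ numR ((i : ℕ) + 1) := numR_ge_two (by omega)
    omega⟩

lemma Lmap_val (i : Fin (2 ^ (h + 1) - 1)) :
    ((Lmap h i : Fin (2 ^ (h + 2) - 1)) : ℕ) + 1 = numL ((i : ℕ) + 1) := by
  have h2 := numL_ge_two (n := (i : ℕ) + 1) (by omega)
  simp only [Lmap]
  omega

lemma Rmap_val (i : Fin (2 ^ (h + 1) - 1)) :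
    ((Rmap h i : Fin (2 ^ (h + 2) - 1)) : ℕ) + 1 = numR ((i : ℕ) + 1) := by
  have h2 := numR_ge_two (n := (i : ℕ) + 1) (by omega)
  simp only [Rmap]
  omega

lemma Lmap_inj : Function.Injective (Lmap h) := by
  intro a b hab
  have : numL ((a : ℕ) + 1) = numL ((b : ℕ) + 1) := by
    rw [← Lmap_val a, ← Lmap_val b, hab]
  have := numL_inj (by omega) (by omega) this
  exact Fin.ext (by omega)

lemma Rmap_inj : Function.Injective (Rmap h) := by
  intro a b hab
  have : numR ((a : ℕ) + 1) = numR ((b : ℕ) + 1) := by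
    rw [← Rmap_val a, ← Rmap_val b, hab]
  have := numR_inj (by omega) (by omega) this
  exact Fin.ext (by omega)

lemma Lmap_adj {a b : Fin (2 ^ (h + 1) - 1)} :
    (binTree (h + 1)).Adj a b ↔ (binTree (h + 2)).Adj (Lmap h a) (Lmap h b) := by
  rw [binTree_adj, binTree_adj, Lmap_val, Lmap_val, nadj_numL (by omega) (by omega)]

lemma Rmap_adj {a b : Fin (2 ^ (h + 1) - 1)} :
    (binTree (h + 1)).Adj a b ↔ (binTree (h + 2)).Adj (Rmap h a) (Rmap h b) := by
  rw [binTree_adj, binTree_adj, Rmap_val, Rmap_val, nadj_numR (by omega) (by omega)]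

/-- the main product decomposition: independent sets supported on the two subtrees -/
lemma indepPolyOn_LR (S T : Finset (Fin (2 ^ (h + 1) - 1))) :
    indepPolyOn (binTree (h + 2)) ((S.image (Lmap h)) ∪ (T.image (Rmap h)))
      = indepPolyOn (binTree (h + 1)) S * indepPolyOn (binTree (h + 1)) T := by
  rw [indepPolyOn_union, indepPolyOn_image Lmap_inj (fun a b => Lmap_adj),
    indepPolyOn_image Rmap_inj (fun a b => Rmap_adj)]
  · intro a ha hb
    simp only [Finset.mem_image] at ha hb
    obtain ⟨x, _, rfl⟩ := ha
    obtain ⟨y, _, hy⟩ := hb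
    have h1 : numL ((x : ℕ) + 1) = numR ((y : ℕ) + 1) := by
      rw [← Lmap_val x, ← Rmap_val y, hy]
    exact numL_ne_numR (by omega) (by omega) h1
  · intro a ha b hb
    simp only [Finset.mem_image] at ha hb
    obtain ⟨x, _, rfl⟩ := ha
    obtain ⟨y, _, rfl⟩ := hb
    rw [binTree_adj, Lmap_val, Rmap_val]
    exact not_nadj_numL_numR (by omega) (by omega)

lemma erase_root_eq :
    (Finset.univ : Finset (Fin (2 ^ (h + 2) - 1))).erase (rt (h + 1)) =
      (Finset.univ.image (Lmap h)) ∪ (Finset.univ.image (Rmap h)) := by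
  ext v
  simp only [Finset.mem_erase, Finset.mem_union, Finset.mem_image, Finset.mem_univ,
    and_true, true_and, exists_eq_right]
  constructor
  · intro hv
    have hv0 : 1 ≤ (v : ℕ) := by
      rcases Nat.eq_zero_or_pos (v : ℕ) with h0 | h0
      · exact absurd (Fin.ext (by simp [rt, h0])) hv
      · omega
    obtain ⟨n, hn1, hn2, hn3⟩ := num_surj (m := (v : ℕ) + 1) (by omega)
    have hlog : Nat.log 2 ((v : ℕ) + 1) ≤ h + 1 := by
      have := Nat.log_lt_of_lt_pow (b := 2) (show (v:ℕ)+1 ≠ 0 by omega) (fin_succ_lt v)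
      omega
    have hnlt : n < 2 ^ (h + 1) := lt_of_lt_of_le hn2 (two_pow_mono hlog)
    rcases hn3 with hL | hR
    · refine Or.inl ⟨⟨n - 1, by omega⟩, Fin.ext ?_⟩
      have hval := Lmap_val (h := h) ⟨n - 1, by omega⟩
      simp only [Fin.val_mk] at hval ⊢
      rw [show n - 1 + 1 = n by omega] at hval
      omega
    · refine Or.inr ⟨⟨n - 1, by omega⟩, Fin.ext ?_⟩
      have hval := Rmap_val (h := h) ⟨n - 1, by omega⟩
      simp only [Fin.val_mk] at hval ⊢
      rw [show n - 1 + 1 = n by omega] at hval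
      omega
  · rintro (⟨a, rfl⟩ | ⟨a, rfl⟩)
    · have := Lmap_val a
      have h2 := numL_ge_two (n := (a : ℕ) + 1) (by omega)
      intro hc
      have : ((Lmap h a : Fin (2 ^ (h + 2) - 1)) : ℕ) = 0 := by rw [hc]; rfl
      omega
    · have := Rmap_val a
      have h2 := numR_ge_two (n := (a : ℕ) + 1) (by omega)
      intro hc
      have : ((Rmap h a : Fin (2 ^ (h + 2) - 1)) : ℕ) = 0 := by rw [hc]; rfl
      omega

end graphlayer

section recursion

lemma filter_root_eq (h : ℕ) :
    ((Finset.univ : Finset (Fin (2 ^ (h + 2) - 1))).filter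
        (fun v => v ≠ rt (h + 1) ∧ ¬ (binTree (h + 2)).Adj (rt (h + 1)) v)) =
      ((Finset.univ.erase (rt h)).image (Lmap h))
        ∪ ((Finset.univ.erase (rt h)).image (Rmap h)) := by
  ext v
  simp only [Finset.mem_filter, Finset.mem_union, Finset.mem_image, Finset.mem_erase,
    Finset.mem_univ, true_and, and_true]
  constructor
  · rintro ⟨hne, hnadj⟩
    have hv0 : 1 ≤ (v : ℕ) := by
      rcases Nat.eq_zero_or_pos (v : ℕ) with h0 | h0
      · exact absurd (Fin.ext (by simp [rt, h0])) hne
      · omega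
    rw [binTree_adj] at hnadj
    have hrtval : ((rt (h + 1) : Fin (2 ^ (h + 2) - 1)) : ℕ) = 0 := rfl
    rw [hrtval] at hnadj
    unfold nadj at hnadj
    have hv4 : 4 ≤ (v : ℕ) + 1 := by omega
    obtain ⟨n, hn1, hn2, hn3⟩ := num_surj (m := (v : ℕ) + 1) (by omega)
    have hlog : Nat.log 2 ((v : ℕ) + 1) ≤ h + 1 := by
      have := Nat.log_lt_of_lt_pow (b := 2) (show (v : ℕ) + 1 ≠ 0 by omega) (fin_succ_lt v)
      omega
    have hnlt : n < 2 ^ (h + 1) := lt_of_lt_of_le hn2 (two_pow_mono hlog)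
    have hn2' : 2 ≤ n := by
      by_contra hcon
      have hn1' : n = 1 := by omega
      rcases hn3 with hL | hR
      · rw [hn1', numL_one] at hL; omega
      · rw [hn1', numR_one] at hR; omega
    have hanez : ∀ (a : Fin (2 ^ (h + 1) - 1)), (a : ℕ) = n - 1 → a ≠ rt h := by
      intro a hav hc
      have : (a : ℕ) = 0 := by rw [hc]; rfl
      omega
    rcases hn3 with hL | hR
    · refine Or.inl ⟨⟨n - 1, by omega⟩, hanez _ rfl, Fin.ext ?_⟩
      have hval := Lmap_val (h := h) ⟨n - 1, by omega⟩
      simp only [Fin.val_mk] at hval ⊢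
      rw [show n - 1 + 1 = n by omega] at hval
      omega
    · refine Or.inr ⟨⟨n - 1, by omega⟩, hanez _ rfl, Fin.ext ?_⟩
      have hval := Rmap_val (h := h) ⟨n - 1, by omega⟩
      simp only [Fin.val_mk] at hval ⊢
      rw [show n - 1 + 1 = n by omega] at hval
      omega
  · rintro (⟨a, ha, rfl⟩ | ⟨a, ha, rfl⟩)
    · have ha1 : 1 ≤ (a : ℕ) := by
        rcases Nat.eq_zero_or_pos (a : ℕ) with h0 | h0
        · exact absurd (Fin.ext (by simp [rt, h0])) ha
        · omega
      have hval := Lmap_val a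
      have h4 : 4 ≤ numL ((a : ℕ) + 1) := numL_ge_four (by omega)
      constructor
      · intro hc
        have : ((Lmap h a : Fin (2 ^ (h + 2) - 1)) : ℕ) = 0 := by rw [hc]; rfl
        omega
      · rw [binTree_adj]
        have hrtval : ((rt (h + 1) : Fin (2 ^ (h + 2) - 1)) : ℕ) = 0 := rfl
        rw [hrtval, hval]
        unfold nadj
        omega
    · have ha1 : 1 ≤ (a : ℕ) := by
        rcases Nat.eq_zero_or_pos (a : ℕ) with h0 | h0
        · exact absurd (Fin.ext (by simp [rt, h0])) ha
        · omega
      have hval := Rmap_val a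
      have h4 : 4 ≤ numR ((a : ℕ) + 1) := numR_ge_four (by omega)
      constructor
      · intro hc
        have : ((Rmap h a : Fin (2 ^ (h + 2) - 1)) : ℕ) = 0 := by rw [hc]; rfl
        omega
      · rw [binTree_adj]
        have hrtval : ((rt (h + 1) : Fin (2 ^ (h + 2) - 1)) : ℕ) = 0 := rfl
        rw [hrtval, hval]
        unfold nadj
        omega

lemma indepPolyOn_erase_root (h : ℕ) :
    indepPolyOn (binTree (h + 2)) (Finset.univ.erase (rt (h + 1))) =
      indepPoly (binTree (h + 1)) ^ 2 := by
  rw [erase_root_eq, indepPolyOn_LR, indepPoly, sq]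

lemma P0 : indepPoly (binTree 0) = 1 := by
  rw [indepPoly]
  have huniv : (Finset.univ : Finset (Fin (2 ^ 0 - 1))) = ∅ := by
    apply Finset.eq_empty_of_forall_notMem
    intro x _
    have := x.2
    norm_num at this
  rw [huniv, indepPolyOn_empty]

lemma erase_rt0 : (Finset.univ : Finset (Fin (2 ^ 1 - 1))).erase (rt 0) = ∅ := by
  apply Finset.eq_empty_of_forall_notMem
  intro x hx
  rw [Finset.mem_erase] at hx
  exact hx.1 (Fin.ext (by have := x.2; norm_num at this; simp [rt, this]))

lemma P1 : indepPoly (binTree 1) = 1 + X := by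
  rw [indepPoly, indepPolyOn_erase (r := rt 0) (Finset.mem_univ _), erase_rt0]
  have h2 : (Finset.univ : Finset (Fin (2 ^ 1 - 1))).filter
      (fun v => v ≠ rt 0 ∧ ¬ (binTree 1).Adj (rt 0) v) = ∅ := by
    apply Finset.eq_empty_of_forall_notMem
    intro x hx
    rw [Finset.mem_filter] at hx
    exact hx.2.1 (Fin.ext (by have := x.2; norm_num at this; simp [rt, this]))
  rw [h2, indepPolyOn_empty]
  ring

lemma P_rec' (h : ℕ) : indepPoly (binTree (h + 2)) =
    indepPoly (binTree (h + 1)) ^ 2 + X * indepPoly (binTree h) ^ 4 := by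
  rw [indepPoly, indepPolyOn_erase (r := rt (h + 1)) (Finset.mem_univ _),
    indepPolyOn_erase_root, filter_root_eq, indepPolyOn_LR]
  cases h with
  | zero =>
    rw [erase_rt0, indepPolyOn_empty, P0]
    ring
  | succ k =>
    rw [indepPolyOn_erase_root]
    ring

end recursion

section degrees
variable {k : ℕ}

lemma pow8 (k : ℕ) : 8 ≤ 2 ^ (k + 3) :=
  le_trans (by norm_num) (two_pow_mono (show 3 ≤ k + 3 by omega))

lemma pow4 (k : ℕ) : 4 ≤ 2 ^ (k + 2) :=
  le_trans (by norm_num) (two_pow_mono (show 2 ≤ k + 2 by omega))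

lemma pow_succ_32 (k : ℕ) : 2 ^ (k + 3) = 2 * 2 ^ (k + 2) := by ring

lemma deg_le (v : Fin (2 ^ (k + 3) - 1)) : (binTree (k + 3)).degree v ≤ 3 := by
  show ((binTree (k + 3)).neighborFinset v).card ≤ 3
  have hsub : (binTree (k + 3)).neighborFinset v ⊆
      Finset.univ.filter (fun u : Fin (2 ^ (k + 3) - 1) =>
        (u : ℕ) + 1 = 2 * ((v : ℕ) + 1) ∨ (u : ℕ) + 1 = 2 * ((v : ℕ) + 1) + 1 ∨
          (u : ℕ) + 1 = ((v : ℕ) + 1) / 2) := by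
    intro u hu
    rw [SimpleGraph.mem_neighborFinset, binTree_adj] at hu
    simp only [Finset.mem_filter, Finset.mem_univ, true_and]
    unfold nadj at hu
    omega
  refine le_trans (Finset.card_le_card hsub) ?_
  have hinj : ∀ a ∈ Finset.univ.filter (fun u : Fin (2 ^ (k + 3) - 1) =>
        (u : ℕ) + 1 = 2 * ((v : ℕ) + 1) ∨ (u : ℕ) + 1 = 2 * ((v : ℕ) + 1) + 1 ∨
          (u : ℕ) + 1 = ((v : ℕ) + 1) / 2), ∀ b ∈ Finset.univ.filter
          (fun u : Fin (2 ^ (k + 3) - 1) =>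
        (u : ℕ) + 1 = 2 * ((v : ℕ) + 1) ∨ (u : ℕ) + 1 = 2 * ((v : ℕ) + 1) + 1 ∨
          (u : ℕ) + 1 = ((v : ℕ) + 1) / 2), ((a : ℕ) = (b : ℕ)) → a = b :=
    fun a _ b _ hab => Fin.ext hab
  refine le_trans (Finset.card_le_card_of_injOn
    (t := ({2 * ((v : ℕ) + 1) - 1, 2 * ((v : ℕ) + 1), ((v : ℕ) + 1) / 2 - 1} : Finset ℕ))
    (fun u => (u : ℕ)) ?_ hinj) ?_
  · intro u hu
    simp only [Finset.mem_coe, Finset.mem_filter, Finset.mem_univ, true_and] at hu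
    simp only [Finset.mem_coe, Finset.mem_insert, Finset.mem_singleton]
    omega
  · have h1 := Finset.card_insert_le (2 * ((v : ℕ) + 1) - 1)
      ({2 * ((v : ℕ) + 1), ((v : ℕ) + 1) / 2 - 1} : Finset ℕ)
    have h2 := Finset.card_insert_le (2 * ((v : ℕ) + 1))
      ({((v : ℕ) + 1) / 2 - 1} : Finset ℕ)
    have h3 : ({((v : ℕ) + 1) / 2 - 1} : Finset ℕ).card = 1 := Finset.card_singleton _
    omega

lemma deg_root : (binTree (k + 3)).degree (rt (k + 2)) = 2 := by
  show ((binTree (k + 3)).neighborFinset (rt (k + 2))).card = 2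
  have h8 := pow8 k
  have hnb : (binTree (k + 3)).neighborFinset (rt (k + 2)) =
      {(⟨1, by omega⟩ : Fin (2 ^ (k + 3) - 1)), ⟨2, by omega⟩} := by
    ext u
    rw [SimpleGraph.mem_neighborFinset, binTree_adj]
    have hrtval : ((rt (k + 2) : Fin (2 ^ (k + 3) - 1)) : ℕ) = 0 := rfl
    rw [hrtval]
    simp only [Finset.mem_insert, Finset.mem_singleton, Fin.ext_iff, Fin.val_mk]
    unfold nadj
    omega
  rw [hnb, Finset.card_insert_of_notMem (by simp [Fin.ext_iff]), Finset.card_singleton]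

lemma deg_internal (v : Fin (2 ^ (k + 3) - 1)) (h2 : 2 ≤ (v : ℕ) + 1)
    (hc : (v : ℕ) + 1 < 2 ^ (k + 2)) : (binTree (k + 3)).degree v = 3 := by
  show ((binTree (k + 3)).neighborFinset v).card = 3
  have h8 := pow8 k
  have hp := pow_succ_32 k
  have hvb := v.2
  have hnb : (binTree (k + 3)).neighborFinset v =
      {(⟨((v : ℕ) + 1) / 2 - 1, by omega⟩ : Fin (2 ^ (k + 3) - 1)),
        ⟨2 * ((v : ℕ) + 1) - 1, by omega⟩, ⟨2 * ((v : ℕ) + 1), by omega⟩} := by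
    ext u
    rw [SimpleGraph.mem_neighborFinset, binTree_adj]
    simp only [Finset.mem_insert, Finset.mem_singleton, Fin.ext_iff, Fin.val_mk]
    unfold nadj
    omega
  have hne1 : (⟨((v : ℕ) + 1) / 2 - 1, by omega⟩ : Fin (2 ^ (k + 3) - 1)) ∉
      ({⟨2 * ((v : ℕ) + 1) - 1, by omega⟩, ⟨2 * ((v : ℕ) + 1), by omega⟩} :
        Finset (Fin (2 ^ (k + 3) - 1))) := by
    simp only [Finset.mem_insert, Finset.mem_singleton, Fin.ext_iff, Fin.val_mk]
    omega
  have hne2 : (⟨2 * ((v : ℕ) + 1) - 1, by omega⟩ : Fin (2 ^ (k + 3) - 1)) ∉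
      ({⟨2 * ((v : ℕ) + 1), by omega⟩} : Finset (Fin (2 ^ (k + 3) - 1))) := by
    simp only [Finset.mem_singleton, Fin.ext_iff, Fin.val_mk]
    omega
  rw [hnb, Finset.card_insert_of_notMem hne1, Finset.card_insert_of_notMem hne2,
    Finset.card_singleton]

lemma deg_leaf (v : Fin (2 ^ (k + 3) - 1)) (h2 : 2 ≤ (v : ℕ) + 1)
    (hc : 2 ^ (k + 2) ≤ (v : ℕ) + 1) : (binTree (k + 3)).degree v = 1 := by
  show ((binTree (k + 3)).neighborFinset v).card = 1
  have hp := pow_succ_32 k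
  have hvb := v.2
  have hnb : (binTree (k + 3)).neighborFinset v =
      {(⟨((v : ℕ) + 1) / 2 - 1, by omega⟩ : Fin (2 ^ (k + 3) - 1))} := by
    ext u
    rw [SimpleGraph.mem_neighborFinset, binTree_adj]
    simp only [Finset.mem_singleton, Fin.ext_iff, Fin.val_mk]
    have hub := u.2
    unfold nadj
    omega
  rw [hnb, Finset.card_singleton]

lemma maxDeg_eq : (binTree (k + 3)).maxDegree = 3 := by
  apply le_antisymm
  · exact SimpleGraph.maxDegree_le_of_forall_degree_le _ _ deg_le
  · have h8 := pow8 k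
    have h4 := pow4 k
    have hv : (binTree (k + 3)).degree (⟨1, by omega⟩ : Fin (2 ^ (k + 3) - 1)) = 3 := by
      apply deg_internal _ (by norm_num)
      simp only [Fin.val_mk]
      omega
    have hle := SimpleGraph.degree_le_maxDegree (binTree (k + 3))
      (⟨1, by omega⟩ : Fin (2 ^ (k + 3) - 1))
    omega

/-- embedding of `binTree (h+1)` into `binTree (h+2)` as the non-leaf part -/
def Imap (h : ℕ) (i : Fin (2 ^ (h + 1) - 1)) : Fin (2 ^ (h + 2) - 1) :=
  ⟨(i : ℕ), by
    have := i.2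
    have hmono : (2:ℕ) ^ (h + 1) ≤ 2 ^ (h + 2) := two_pow_mono (by omega)
    omega⟩

lemma Imap_val {h : ℕ} (i : Fin (2 ^ (h + 1) - 1)) :
    ((Imap h i : Fin (2 ^ (h + 2) - 1)) : ℕ) = (i : ℕ) := rfl

lemma Imap_inj {h : ℕ} : Function.Injective (Imap h) := by
  intro a b hab
  have h1 : ((Imap h a : Fin (2 ^ (h + 2) - 1)) : ℕ) = ((Imap h b : Fin (2 ^ (h + 2) - 1)) : ℕ) := by
    rw [hab]
  rw [Imap_val, Imap_val] at h1
  exact Fin.ext h1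

lemma Imap_adj {h : ℕ} {a b : Fin (2 ^ (h + 1) - 1)} :
    (binTree (h + 1)).Adj a b ↔ (binTree (h + 2)).Adj (Imap h a) (Imap h b) := by
  rw [binTree_adj, binTree_adj, Imap_val, Imap_val]

lemma star_eq (k : ℕ) :
    (Finset.univ.filter fun v => (binTree (k + 3)).degree v = (binTree (k + 3)).maxDegree)
      = (Finset.univ.erase (rt (k + 1))).image (Imap (k + 1)) := by
  rw [maxDeg_eq]
  ext v
  simp only [Finset.mem_filter, Finset.mem_image, Finset.mem_erase, Finset.mem_univ,
    true_and, and_true]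
  constructor
  · intro hdeg
    have hkey : 2 ≤ (v : ℕ) + 1 ∧ (v : ℕ) + 1 < 2 ^ (k + 2) := by
      by_contra hcon
      push_neg at hcon
      rcases Nat.lt_or_ge ((v : ℕ) + 1) 2 with hlt | hge
      · have hval0 : (v : ℕ) = 0 := by omega
        have hv0 : v = rt (k + 2) := Fin.ext (by rw [hval0]; rfl)
        rw [hv0, deg_root] at hdeg
        omega
      · have hleaf := deg_leaf v hge (hcon hge)
        rw [hleaf] at hdeg
        omega
    have hpp : (2:ℕ) ^ (k + 1 + 1) = 2 ^ (k + 2) := rfl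
    refine ⟨⟨(v : ℕ), by omega⟩, ?_, Fin.ext rfl⟩
    intro hcontra
    have hz : ((⟨(v : ℕ), by omega⟩ : Fin (2 ^ (k + 2) - 1)) : ℕ) = 0 := by rw [hcontra]; rfl
    simp only [Fin.val_mk] at hz
    omega
  · rintro ⟨a, ha, rfl⟩
    have ha1 : 1 ≤ (a : ℕ) := by
      rcases Nat.eq_zero_or_pos (a : ℕ) with h0 | h0
      · exact absurd (Fin.ext (by simp [rt, h0])) ha
      · omega
    have hab := a.2
    have hpp : (2:ℕ) ^ (k + 1 + 1) = 2 ^ (k + 2) := rfl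
    apply deg_internal
    · rw [Imap_val]; omega
    · rw [Imap_val]; omega

lemma star (k : ℕ) :
    indepPolyOn (binTree (k + 3))
        (Finset.univ.filter fun v => (binTree (k + 3)).degree v = (binTree (k + 3)).maxDegree)
      = indepPoly (binTree (k + 1)) ^ 2 := by
  rw [star_eq, indepPolyOn_image Imap_inj (fun a b => Imap_adj), indepPolyOn_erase_root]

end degrees

/-- The independence polynomials of complete binary trees satisfy
`P_{T_h} = P_{T_{h-1}}² + x · P_{T_{h-2}}⁴` for `h ≥ 2`, with `P_{T_0} = 1` and
`P_{T_1} = 1 + x`; moreover, for `h ≥ 3`,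
`P_{T_h*} = P_{T_{h-2}}²`, where `T_h*` is the induced subgraph on the vertices of maximum
degree (counted via independent sets of `T_h` consisting of maximum-degree vertices). -/
theorem stmt12 :
    (∀ h : ℕ, 2 ≤ h →
      indepPoly (binTree h)
        = indepPoly (binTree (h - 1)) ^ 2 + X * indepPoly (binTree (h - 2)) ^ 4) ∧
    indepPoly (binTree 0) = 1 ∧
    indepPoly (binTree 1) = 1 + X ∧
    ∀ h : ℕ, 3 ≤ h →
      indepPolyOn (binTree h)
          (Finset.univ.filter fun v => (binTree h).degree v = (binTree h).maxDegree)
        = indepPoly (binTree (h - 2)) ^ 2 := by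
  refine ⟨?_, P0, P1, ?_⟩
  · intro h hh
    obtain ⟨m, rfl⟩ : ∃ m, h = m + 2 := ⟨h - 2, by omega⟩
    exact P_rec' m
  · intro h hh
    obtain ⟨m, rfl⟩ : ∃ m, h = m + 3 := ⟨h - 3, by omega⟩
    exact star m
end
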